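/- Let p be a prime, e ≥ 1 an integer, and let P be an element of the (ℤ/p^eℤ)-module M = (ℤ/p^eℤ) × (ℤ/p^eℤ) with addOrderOf P = p^e. Then the number of elements Q of M such that {P, Q} spans M as a (ℤ/p^eℤ)-module is p^e · φ(p^e) = p^(2e−1)·(p − 1). In Lean terms: Nat.card {Q : ZMod (p^e) × ZMod (p^e) // Submodule.span (ZMod (p^e)) {P, Q} = ⊤} = p^e * (p^e).totient. -/

import Mathlib

section aux

variable {R : Type*} [CommRing R]

/-- Over a commutative ring, a pair spans `R × R` iff its determinant is a unit. -/
lemma span_pair_top_iff_det (P Q : R × R) :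
    Submodule.span R {P, Q} = ⊤ ↔ IsUnit (P.1 * Q.2 - P.2 * Q.1) := by
  constructor
  · intro h
    have h1 : ((1 : R), (0 : R)) ∈ Submodule.span R {P, Q} := by rw [h]; trivial
    have h2 : ((0 : R), (1 : R)) ∈ Submodule.span R {P, Q} := by rw [h]; trivial
    rw [Submodule.mem_span_pair] at h1 h2
    obtain ⟨x, y, hxy⟩ := h1
    obtain ⟨z, w, hzw⟩ := h2
    have e1 : x * P.1 + y * Q.1 = 1 := congrArg Prod.fst hxy
    have e2 : x * P.2 + y * Q.2 = 0 := congrArg Prod.snd hxy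
    have e3 : z * P.1 + w * Q.1 = 0 := congrArg Prod.fst hzw
    have e4 : z * P.2 + w * Q.2 = 1 := congrArg Prod.snd hzw
    refine IsUnit.of_mul_eq_one (x * w - y * z) ?_
    have : (P.1 * Q.2 - P.2 * Q.1) * (x * w - y * z) =
        (x * P.1 + y * Q.1) * (z * P.2 + w * Q.2)
        - (x * P.2 + y * Q.2) * (z * P.1 + w * Q.1) := by ring
    rw [this, e1, e2, e3, e4]; ring
  · rintro ⟨u, hu⟩
    rw [eq_top_iff]
    rintro ⟨a, b⟩ -
    have hmem : ∀ v : R × R, v ∈ Submodule.span R {P, Q} ↔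
        ∃ c d, c • P + d • Q = v := fun v => Submodule.mem_span_pair
    have huv : ((u : R) * (↑u⁻¹ : R)) = 1 := u.mul_inv
    rw [hmem]
    refine ⟨a * ↑u⁻¹ * Q.2 - b * ↑u⁻¹ * Q.1, b * ↑u⁻¹ * P.1 - a * ↑u⁻¹ * P.2, ?_⟩
    have hd : (↑u⁻¹ : R) * (P.1 * Q.2 - P.2 * Q.1) = 1 := by
      rw [← hu]; exact u.inv_mul
    ext
    · show (a * ↑u⁻¹ * Q.2 - b * ↑u⁻¹ * Q.1) * P.1
        + (b * ↑u⁻¹ * P.1 - a * ↑u⁻¹ * P.2) * Q.1 = a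
      have : (a * ↑u⁻¹ * Q.2 - b * ↑u⁻¹ * Q.1) * P.1
          + (b * ↑u⁻¹ * P.1 - a * ↑u⁻¹ * P.2) * Q.1
          = a * ((↑u⁻¹ : R) * (P.1 * Q.2 - P.2 * Q.1)) := by ring
      rw [this, hd, mul_one]
    · show (a * ↑u⁻¹ * Q.2 - b * ↑u⁻¹ * Q.1) * P.2
        + (b * ↑u⁻¹ * P.1 - a * ↑u⁻¹ * P.2) * Q.2 = b
      have : (a * ↑u⁻¹ * Q.2 - b * ↑u⁻¹ * Q.1) * P.2
          + (b * ↑u⁻¹ * P.1 - a * ↑u⁻¹ * P.2) * Q.2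
          = b * ((↑u⁻¹ : R) * (P.1 * Q.2 - P.2 * Q.1)) := by ring
      rw [this, hd, mul_one]

end aux

/-- If `a` is a nonunit of `ZMod (p^e)` then `p ∣ a`. -/
lemma p_dvd_of_not_isUnit (p : ℕ) (hp : p.Prime) (e : ℕ) (he : 1 ≤ e)
    (a : ZMod (p ^ e)) (ha : ¬ IsUnit a) : (p : ZMod (p ^ e)) ∣ a := by
  haveI : NeZero (p ^ e) := ⟨pow_ne_zero e hp.ne_zero⟩
  have hcast : ((a.val : ℕ) : ZMod (p ^ e)) = a := by
    rw [ZMod.natCast_val, ZMod.cast_id]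
  by_contra hdvd
  apply ha
  rw [← hcast, ZMod.isUnit_iff_coprime]
  rw [Nat.coprime_pow_right_iff (by omega)]
  refine Nat.coprime_comm.mpr (hp.coprime_iff_not_dvd.mpr ?_)
  intro hpd
  apply hdvd
  obtain ⟨c, hc⟩ := hpd
  exact ⟨(c : ZMod (p ^ e)), by rw [← hcast, hc]; push_cast; ring⟩

theorem count_second_basis_vector (p : ℕ) (hp : p.Prime) (e : ℕ) (he : 1 ≤ e)
    (P : ZMod (p ^ e) × ZMod (p ^ e)) (hP : addOrderOf P = p ^ e) :
    Nat.card {Q : ZMod (p ^ e) × ZMod (p ^ e) //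
      Submodule.span (ZMod (p ^ e)) {P, Q} = ⊤} = p ^ e * (p ^ e).totient := by
  haveI : NeZero (p ^ e) := ⟨pow_ne_zero e hp.ne_zero⟩
  -- P has a unit coordinate
  have hunit : IsUnit P.1 ∨ IsUnit P.2 := by
    by_contra h
    push_neg at h
    obtain ⟨a, ha⟩ := p_dvd_of_not_isUnit p hp e he P.1 h.1
    obtain ⟨b, hb⟩ := p_dvd_of_not_isUnit p hp e he P.2 h.2
    have hzero : (p ^ (e - 1)) • P = 0 := by
      have hpe : ((p : ZMod (p ^ e))) ^ (e - 1) * (p : ZMod (p ^ e)) = 0 := by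
        rw [← pow_succ]
        have : e - 1 + 1 = e := by omega
        rw [this]
        have := ZMod.natCast_self (p ^ e)
        push_cast at this
        exact this
      ext
      · show (p ^ (e - 1) : ℕ) • P.1 = 0
        rw [nsmul_eq_mul, ha]
        push_cast
        rw [← mul_assoc, hpe, zero_mul]
      · show (p ^ (e - 1) : ℕ) • P.2 = 0
        rw [nsmul_eq_mul, hb]
        push_cast
        rw [← mul_assoc, hpe, zero_mul]
    have hdvd := addOrderOf_dvd_of_nsmul_eq_zero hzero
    rw [hP] at hdvd
    have := (Nat.pow_dvd_pow_iff_le_right hp.one_lt).mp hdvd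
    omega
  -- replace the span condition by a determinant condition
  have hcard1 : Nat.card {Q : ZMod (p ^ e) × ZMod (p ^ e) // Submodule.span (ZMod (p ^ e)) {P, Q} = ⊤}
      = Nat.card {Q : ZMod (p ^ e) × ZMod (p ^ e) // IsUnit (P.1 * Q.2 - P.2 * Q.1)} :=
    Nat.card_congr (Equiv.subtypeEquivRight fun Q => by
      rw [span_pair_top_iff_det])
  rw [hcard1]
  -- an explicit bijection with ZMod (p ^ e) × (ZMod (p ^ e))ˣ
  have key : Nat.card (ZMod (p ^ e) × (ZMod (p ^ e))ˣ) = Nat.card {Q : ZMod (p ^ e) × ZMod (p ^ e) // IsUnit (P.1 * Q.2 - P.2 * Q.1)} := by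
    rcases hunit with ⟨w, hw⟩ | ⟨w, hw⟩
    · refine Nat.card_congr ⟨fun x => ⟨(x.1, ↑w⁻¹ * (↑x.2 + P.2 * x.1)), ?_⟩,
        fun Q => (Q.1.1, Q.2.unit), ?_, ?_⟩
      · refine ⟨x.2, ?_⟩
        rw [← hw, Units.mul_inv_cancel_left]
        ring
      · rintro ⟨t, u⟩
        refine Prod.ext rfl (Units.ext ?_)
        show (P.1 * (↑w⁻¹ * (↑u + P.2 * t)) - P.2 * t) = ↑u
        rw [← hw, Units.mul_inv_cancel_left]
        ring
      · rintro ⟨⟨q1, q2⟩, h⟩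
        refine Subtype.ext (Prod.ext rfl ?_)
        show ↑w⁻¹ * (↑h.unit + P.2 * q1) = q2
        rw [h.unit_spec]
        have : P.1 * q2 - P.2 * q1 + P.2 * q1 = P.1 * q2 := by ring
        rw [this, ← hw, Units.inv_mul_cancel_left]
    · refine Nat.card_congr ⟨fun x => ⟨(↑w⁻¹ * (P.1 * x.1 - ↑x.2), x.1), ?_⟩,
        fun Q => (Q.1.2, Q.2.unit), ?_, ?_⟩
      · refine ⟨x.2, ?_⟩
        show ↑x.2 = P.1 * x.1 - P.2 * (↑w⁻¹ * (P.1 * x.1 - ↑x.2))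
        rw [← hw, Units.mul_inv_cancel_left]
        ring
      · rintro ⟨t, u⟩
        refine Prod.ext rfl (Units.ext ?_)
        show (P.1 * t - P.2 * (↑w⁻¹ * (P.1 * t - ↑u))) = ↑u
        rw [← hw, Units.mul_inv_cancel_left]
        ring
      · rintro ⟨⟨q1, q2⟩, h⟩
        refine Subtype.ext (Prod.ext ?_ rfl)
        show ↑w⁻¹ * (P.1 * q2 - ↑h.unit) = q1
        rw [h.unit_spec]
        have : P.1 * q2 - (P.1 * q2 - P.2 * q1) = P.2 * q1 := by ring
        rw [this, ← hw, Units.inv_mul_cancel_left]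
  rw [← key, Nat.card_prod, Nat.card_zmod, Nat.card_eq_fintype_card,
    ZMod.card_units_eq_totient]
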